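/- Under the Farey configuration (integers k ≥ 1, 1 ≤ l ≤ k, c_1 ≥ 1, c_2,…,c_l ≥ 2, c_l > 2, and c_{l+1} = ⋯ = c_k = 2), the normalized Jones polynomials satisfy the Farey recursion J(c_1,…,c_k) = J(c_1,…,c_{l−1}, c_l − 1) + q^{c_k − 1}·J(c_1,…,c_{k−1}); that is, if the rational number α = [[c_1,…,c_k]] is the Farey sum of β = [[c_1,…,c_l − 1]] and γ = [[c_1,…,c_{k−1}]], then J_α(q) = J_β(q) + q^{c_k−1}·J_γ(q). -/

import Mathlib

noncomputable section

/-- The field ℚ(q) of rational functions over ℚ. -/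
abbrev K : Type := RatFunc ℚ

/-- The variable q. -/
def q : K := RatFunc.X

/-- Right q-integer `[n]^♯` with deformation parameter `x`. -/
def qsX (x : K) (n : ℤ) : K := (1 - x ^ n) / (1 - x)

/-- Left q-integer `[n]^♭` with deformation parameter `x`. -/
def qfX (x : K) (n : ℤ) : K := (1 - x ^ (n - 1) + x ^ n - x ^ (n + 1)) / (1 - x)

/-- Right q-integer `[n]^♯_q`. -/
def qs (n : ℤ) : K := qsX q n

/-- Left q-integer `[n]^♭_q`. -/
def qf (n : ℤ) : K := qfX q n

/-- Right q-deformed Euler continuant `E^♯` (first-row expansion of the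
tridiagonal determinant), with parameter `x`. -/
def EsharpX (x : K) : List ℤ → K
  | [] => 1
  | [c] => qsX x c
  | c :: d :: rest => qsX x c * EsharpX x (d :: rest) - x ^ (c - 1) * EsharpX x rest

/-- Left q-deformed Euler continuant `E^♭` (first-row expansion of the
tridiagonal determinant whose (k,k) entry is the left q-integer), with parameter `x`. -/
def EflatX (x : K) : List ℤ → K
  | [] => 1
  | [c] => qfX x c
  | c :: d :: rest => qsX x c * EflatX x (d :: rest) - x ^ (c - 1) * EflatX x rest

def Esharp (L : List ℤ) : K := EsharpX q L

def Eflat (L : List ℤ) : K := EflatX q L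

/-- `E^♯_{j-1}(d_2,…,d_j)` for the input list `(d_1,…,d_j)`, with the
convention `E^♯_{-1}() = 0` when the list is empty. -/
def EsharpD : List ℤ → K
  | [] => 0
  | _ :: rest => Esharp rest

/-- `E^♭_{j-1}(d_2,…,d_j)` for the input list `(d_1,…,d_j)`, with the
convention `E^♭_{-1}() = 1 - q` when the list is empty. -/
def EflatD : List ℤ → K
  | [] => 1 - q
  | _ :: rest => Eflat rest

/-- Left q-deformed negative continued fraction `[[c_1,…,c_k]]^♭_q`. -/
def nflat : List ℤ → K
  | [] => 0
  | [c] => qf c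
  | c :: d :: rest => qs c - q ^ (c - 1) / nflat (d :: rest)

/-- Right q-deformed negative continued fraction `[[c_1,…,c_k]]^♯_q`. -/
def nsharp : List ℤ → K
  | [] => 0
  | [c] => qs c
  | c :: d :: rest => qs c - q ^ (c - 1) / nsharp (d :: rest)

/-- Left q-deformed regular continued fraction, with alternating parameter `x`, `x⁻¹`. -/
def regFlatX : K → List ℤ → K
  | _, [] => 0
  | x, [a] => qfX x a
  | x, a :: d :: rest => qsX x a + x ^ a / regFlatX x⁻¹ (d :: rest)

/-- Left q-deformed regular continued fraction `[a_1,…,a_{2m}]^♭_q`. -/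
def regFlat (L : List ℤ) : K := regFlatX q L

/-- Classical negative continued fraction `[[c_1,…,c_k]] ∈ ℚ`. -/
def negCF : List ℤ → ℚ
  | [] => 0
  | [c] => c
  | c :: d :: rest => c - 1 / negCF (d :: rest)

/-- Classical regular continued fraction `[a_1,…,a_{2m}] ∈ ℚ`. -/
def regCF : List ℤ → ℚ
  | [] => 0
  | [a] => a
  | a :: d :: rest => a + 1 / regCF (d :: rest)

/-- The matrix σ_{1,q} as an invertible 2×2 matrix over ℚ(q). -/
def σ1 : (Matrix (Fin 2) (Fin 2) K)ˣ where
  val := !![q⁻¹, -q⁻¹; 0, 1]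
  inv := !![q, 1; 0, 1]
  val_inv := by
    have hq : (q : K) ≠ 0 := RatFunc.X_ne_zero
    ext i j
    fin_cases i <;> fin_cases j <;>
      simp [Matrix.mul_apply, Fin.sum_univ_two, inv_mul_cancel₀ hq]
  inv_val := by
    have hq : (q : K) ≠ 0 := RatFunc.X_ne_zero
    ext i j
    fin_cases i <;> fin_cases j <;>
      simp [Matrix.mul_apply, Fin.sum_univ_two, mul_inv_cancel₀ hq]

/-- The matrix σ_{2,q} as an invertible 2×2 matrix over ℚ(q). -/
def σ2 : (Matrix (Fin 2) (Fin 2) K)ˣ where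
  val := !![1, 0; 1, q⁻¹]
  inv := !![1, 0; -q, q]
  val_inv := by
    have hq : (q : K) ≠ 0 := RatFunc.X_ne_zero
    ext i j
    fin_cases i <;> fin_cases j <;>
      simp [Matrix.mul_apply, Fin.sum_univ_two, inv_mul_cancel₀ hq]
  inv_val := by
    have hq : (q : K) ≠ 0 := RatFunc.X_ne_zero
    ext i j
    fin_cases i <;> fin_cases j <;>
      simp [Matrix.mul_apply, Fin.sum_univ_two, mul_inv_cancel₀ hq]

/-- The matrix S_q as an invertible 2×2 matrix over ℚ(q). -/
def Sq : (Matrix (Fin 2) (Fin 2) K)ˣ where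
  val := !![0, -q⁻¹; 1, 0]
  inv := !![0, 1; -q, 0]
  val_inv := by
    have hq : (q : K) ≠ 0 := RatFunc.X_ne_zero
    ext i j
    fin_cases i <;> fin_cases j <;>
      simp [Matrix.mul_apply, Fin.sum_univ_two, inv_mul_cancel₀ hq]
  inv_val := by
    have hq : (q : K) ≠ 0 := RatFunc.X_ne_zero
    ext i j
    fin_cases i <;> fin_cases j <;>
      simp [Matrix.mul_apply, Fin.sum_univ_two, mul_inv_cancel₀ hq]

/-- The product σ_{1,q}^{-c_1}·S_q·σ_{1,q}^{-c_2}·S_q⋯σ_{1,q}^{-c_k}·S_q. -/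
def prodCS : List ℤ → (Matrix (Fin 2) (Fin 2) K)ˣ
  | [] => 1
  | c :: rest => σ1 ^ (-c) * Sq * prodCS rest

/-- The product σ_{1,q}^{-a_1}·σ_{2,q}^{a_2}⋯σ_{1,q}^{-a_{2m-1}}·σ_{2,q}^{a_{2m}}. -/
def prodReg : List ℤ → (Matrix (Fin 2) (Fin 2) K)ˣ
  | [] => 1
  | [a] => σ1 ^ (-a)
  | a :: b :: rest => σ1 ^ (-a) * σ2 ^ b * prodReg rest

/-- The sum a_2 + a_4 + ⋯ of the even-indexed entries. -/
def evenSum : List ℤ → ℤ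
  | [] => 0
  | [_] => 0
  | _ :: b :: rest => b + evenSum rest

/-- Möbius action of a 2×2 matrix on ℚ(q). -/
def mobius (A : Matrix (Fin 2) (Fin 2) K) (x : K) : K :=
  (A 0 0 * x + A 0 1) / (A 1 0 * x + A 1 1)

/-- Normalized Jones polynomial J(c_1,…,c_k) = q·E^♯_k(c_1,…,c_k) + (1−q)·E^♯_{k−1}(c_2,…,c_k). -/
def Jpoly (L : List ℤ) : K := q * Esharp L + (1 - q) * EsharpD L

lemma q_ne_zero : (q : K) ≠ 0 := RatFunc.X_ne_zero

lemma one_sub_q_ne_zero : (1 : K) - q ≠ 0 := by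
  intro h
  have h1 : (q : K) = 1 := by linear_combination -h
  have h2 := congrArg RatFunc.num h1
  simp [q] at h2
  simpa using congrArg Polynomial.natDegree h2

lemma q_zpow_succ (c : ℤ) : q ^ c = q ^ (c - 1) * q := by
  rw [← zpow_add_one₀ q_ne_zero, sub_add_cancel]

lemma qsX_succ (c : ℤ) : qsX q c = qsX q (c - 1) + q ^ (c - 1) := by
  have h1 := one_sub_q_ne_zero
  rw [qsX, qsX, q_zpow_succ c]
  field_simp
  ring

lemma qs_two : qs 2 = 1 + q := by
  have h1 := one_sub_q_ne_zero
  rw [qs, qsX, show (2:ℤ) = 1 + 1 from rfl, zpow_add₀ q_ne_zero, zpow_one]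
  field_simp
  ring

lemma getLast!_concat_int (X : List ℤ) (a : ℤ) : (X ++ [a]).getLast! = a :=
  List.getLast!_of_getLast? List.getLast?_concat

theorem twoApp (b a : ℤ) : ∀ M : List ℤ,
    Esharp (M ++ [b, a]) = qs a * Esharp (M ++ [b]) - q ^ (b - 1) * Esharp M
  | [] => by simp only [List.nil_append, Esharp, EsharpX, qs]; ring
  | [m] => by simp only [List.cons_append, List.nil_append, Esharp, EsharpX, qs]; ring
  | m :: m2 :: M' => by
    have h1 := twoApp b a (m2 :: M')
    have h2 := twoApp b a M'
    simp only [List.cons_append, Esharp, EsharpX, qs] at *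
    linear_combination qsX q m * h1 - q ^ (m - 1) * h2

theorem succApp (c : ℤ) : ∀ M : List ℤ,
    Esharp (M ++ [c]) = Esharp (M ++ [c - 1]) + q ^ (c - 1) * Esharp M
  | [] => by
    simp only [List.nil_append, Esharp, EsharpX]
    linear_combination qsX_succ c
  | [m] => by
    simp only [List.cons_append, List.nil_append, Esharp, EsharpX]
    linear_combination qsX q m * qsX_succ c
  | m :: m2 :: M' => by
    have h1 := succApp c (m2 :: M')
    have h2 := succApp c M'
    simp only [List.cons_append, Esharp, EsharpX] at *
    linear_combination qsX q m * h1 - q ^ (m - 1) * h2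

lemma JtwoApp (M : List ℤ) (b a : ℤ) :
    Jpoly (M ++ [b, a]) = qs a * Jpoly (M ++ [b]) - q ^ (b - 1) * Jpoly M := by
  cases M with
  | nil => simp only [List.nil_append, Jpoly, EsharpD, Esharp, EsharpX, qs]; ring
  | cons m M' =>
    have h1 := twoApp b a (m :: M')
    have h2 := twoApp b a M'
    simp only [List.cons_append, Jpoly, EsharpD] at *
    linear_combination q * h1 + (1 - q) * h2

lemma JsuccApp (M : List ℤ) (c : ℤ) :
    Jpoly (M ++ [c]) = Jpoly (M ++ [c - 1]) + q ^ (c - 1) * Jpoly M := by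
  cases M with
  | nil =>
    simp only [List.nil_append, Jpoly, EsharpD, Esharp, EsharpX]
    have h := qsX_succ c
    linear_combination q * h
  | cons m M' =>
    have h1 := succApp c (m :: M')
    have h2 := succApp c M'
    simp only [List.cons_append, Jpoly, EsharpD] at *
    linear_combination q * h1 + (1 - q) * h2

theorem Jones_aux (B : List ℤ) (c : ℤ) : ∀ n : ℕ,
    Jpoly (B ++ [c] ++ List.replicate (n + 1) 2)
      = Jpoly (B ++ [c - 1]) + q * Jpoly (B ++ [c] ++ List.replicate n 2)
  | 0 => by
    have h1 := JtwoApp B c 2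
    have h2 := JsuccApp B c
    rw [qs_two] at h1
    simp only [List.replicate_succ, List.replicate_zero, List.append_assoc,
      List.cons_append, List.nil_append, List.append_nil] at *
    linear_combination h1 + h2
  | (n + 1) => by
    have ih := Jones_aux B c n
    have h1 := JtwoApp (B ++ [c] ++ List.replicate n 2) 2 2
    rw [qs_two, show (2:ℤ) - 1 = 1 by norm_num, zpow_one] at h1
    have e1 : List.replicate (n + 1 + 1) (2:ℤ) = List.replicate n 2 ++ [2, 2] := by
      rw [show n + 1 + 1 = n + 2 from rfl, List.replicate_add]; rfl
    have e2 : List.replicate (n + 1) (2:ℤ) = List.replicate n 2 ++ [2] :=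
      List.replicate_succ'
    rw [e2, ← List.append_assoc] at ih
    rw [e1, e2, ← List.append_assoc, ← List.append_assoc]
    linear_combination h1 + ih

/-- Farey recursion for normalized Jones polynomials.  Here
`L = (c_1,…,c_l)` with c_1 ≥ 1, c_2,…,c_l ≥ 2, c_l > 2, and the full sequence is
`L ++ (2,…,2)` with `n = k - l` copies of 2. -/
theorem Jones_farey (L : List ℤ) (hL : L ≠ [])
    (h1 : 1 ≤ L.head!) (h2 : ∀ x ∈ L.tail, 2 ≤ x) (h3 : 2 < L.getLast!) (n : ℕ) :
    Jpoly (L ++ List.replicate n 2)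
      = Jpoly (L.dropLast ++ [L.getLast! - 1])
        + q ^ ((L ++ List.replicate n 2).getLast! - 1)
          * Jpoly ((L ++ List.replicate n 2).dropLast) := by
  rcases L.eq_nil_or_concat with rfl | ⟨B, c, rfl⟩
  · exact absurd rfl hL
  simp only [List.concat_eq_append] at h3 ⊢
  cases n with
  | zero =>
    simp only [List.replicate_zero, List.append_nil, List.dropLast_concat,
      getLast!_concat_int]
    exact JsuccApp B c
  | succ m =>
    have hg2 : ((B ++ [c]) ++ List.replicate (m + 1) 2).getLast! = 2 := by
      rw [List.replicate_succ', ← List.append_assoc, getLast!_concat_int]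
    have hd : ((B ++ [c]) ++ List.replicate (m + 1) 2).dropLast
        = B ++ [c] ++ List.replicate m 2 := by
      rw [List.replicate_succ', ← List.append_assoc, List.dropLast_concat]
    rw [hg2, hd, List.dropLast_concat, getLast!_concat_int,
      show (2:ℤ) - 1 = 1 by norm_num, zpow_one]
    exact Jones_aux B c m
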